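/- Let u : ℝ → ℂ be continuous with compact support, and define its Bloch transform ũ(l, x) = ∑_{n ∈ ℤ} u(x + 2πn)·e^{−i·l·(x + 2πn)} for l, x ∈ ℝ. Then ∫_ℝ |u(x)|² dx = ∫_{−1/2}^{1/2} ∫_0^{2π} |ũ(l, x)|² dx dl. -/

import Mathlib

open MeasureTheory Complex

lemma exp_orth (k : ℤ) :
    (∫ l in (-(1/2) : ℝ)..(1/2), Complex.exp ((-Complex.I * (2 * Real.pi * k)) * l)) =
      if k = 0 then 1 else 0 := by
  rcases eq_or_ne k 0 with hk | hk
  · norm_num [hk]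
  · have hc : (-Complex.I * (2 * Real.pi * (k:ℂ))) ≠ 0 := by
      simp [Real.pi_ne_zero, hk, Complex.I_ne_zero]
    rw [integral_exp_mul_complex hc]
    have h1 : (-Complex.I * (2 * Real.pi * (k:ℂ))) * ((1:ℝ)/2 : ℝ) = -(Real.pi * k * Complex.I) := by
      push_cast; ring
    have h2 : (-Complex.I * (2 * Real.pi * (k:ℂ))) * ((-(1/2):ℝ) : ℂ) = Real.pi * k * Complex.I := by
      push_cast; ring
    have key : Complex.exp (-(Real.pi * k * Complex.I)) = Complex.exp (Real.pi * k * Complex.I) := by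
      have : (-(Real.pi * k * Complex.I) : ℂ) = Real.pi * k * Complex.I + ((-k : ℤ) : ℂ) * (2 * (Real.pi:ℂ) * Complex.I) := by
        push_cast; ring
      rw [this, Complex.exp_add, Complex.exp_int_mul_two_pi_mul_I, mul_one]
    rw [h1, h2, key, sub_self, zero_div, if_neg hk]

lemma normsq_cast (z : ℂ) : ((‖z‖^2 : ℝ) : ℂ) = z * (starRingEnd ℂ) z := by
  rw [Complex.mul_conj]
  norm_cast
  rw [Complex.sq_norm]

lemma term_mul (a b : ℂ) (l x : ℝ) (n m : ℤ) :
    (a * Complex.exp (-Complex.I * (l:ℂ) * ((x + 2 * Real.pi * (n:ℝ) : ℝ) : ℂ))) *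
      (starRingEnd ℂ) (b * Complex.exp (-Complex.I * (l:ℂ) * ((x + 2 * Real.pi * (m:ℝ) : ℝ) : ℂ)))
    = (a * (starRingEnd ℂ) b) *
        Complex.exp ((-Complex.I * (2 * Real.pi * ((n - m : ℤ) : ℂ))) * (l:ℂ)) := by
  rw [map_mul, ← Complex.exp_conj]
  have h : (starRingEnd ℂ) (-Complex.I * (l:ℂ) * ((x + 2 * Real.pi * (m:ℝ) : ℝ) : ℂ))
      = Complex.I * (l:ℂ) * ((x + 2 * Real.pi * (m:ℝ) : ℝ) : ℂ) := by
    simp only [map_mul, map_neg, Complex.conj_I, Complex.conj_ofReal]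
    ring
  rw [h]
  rw [show (a * Complex.exp (-Complex.I * (l:ℂ) * ((x + 2 * Real.pi * (n:ℝ) : ℝ) : ℂ))) *
      ((starRingEnd ℂ) b * Complex.exp (Complex.I * (l:ℂ) * ((x + 2 * Real.pi * (m:ℝ) : ℝ) : ℂ)))
      = (a * (starRingEnd ℂ) b) *
        (Complex.exp (-Complex.I * (l:ℂ) * ((x + 2 * Real.pi * (n:ℝ) : ℝ) : ℂ)) *
         Complex.exp (Complex.I * (l:ℂ) * ((x + 2 * Real.pi * (m:ℝ) : ℝ) : ℂ))) from by ring]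
  rw [← Complex.exp_add]
  congr 1
  push_cast
  ring

theorem bloch_plancherel (u : ℝ → ℂ) (hu : Continuous u) (hc : HasCompactSupport u) :
    ∫ x : ℝ, ‖u x‖ ^ 2 =
      ∫ l in (-(1 / 2) : ℝ)..(1 / 2), ∫ x in (0 : ℝ)..(2 * Real.pi),
        ‖∑' n : ℤ, u (x + 2 * Real.pi * (n : ℝ)) *
            Complex.exp (-Complex.I * (l : ℂ) * ((x + 2 * Real.pi * (n : ℝ) : ℝ) : ℂ))‖ ^ 2 := by
  -- choose M with support ⊆ [-2πM + something]
  obtain ⟨R, hR0, hR⟩ : ∃ R : ℝ, 0 ≤ R ∧ tsupport u ⊆ Metric.closedBall 0 R := by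
    obtain ⟨R, hR⟩ := hc.isBounded.subset_closedBall 0
    exact ⟨max R 0, le_max_right _ _, hR.trans (Metric.closedBall_subset_closedBall (le_max_left _ _))⟩
  set M : ℕ := ⌈R⌉₊ + 1 with hMdef
  have hpi : (0:ℝ) < Real.pi := Real.pi_pos
  have hRM : R < 2 * Real.pi * M := by
    have h1 : R < (M:ℝ) := by
      calc R ≤ (⌈R⌉₊ : ℝ) := Nat.le_ceil R
      _ < (M:ℝ) := by rw [hMdef]; push_cast; linarith
    have h2 : (M:ℝ) ≤ 2 * Real.pi * M := by
      nlinarith [Real.pi_gt_three, (Nat.cast_nonneg M : (0:ℝ) ≤ (M:ℝ))]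
    linarith
  have hvanish : ∀ y : ℝ, 2 * Real.pi * M ≤ |y| → u y = 0 := by
    intro y hy
    apply image_eq_zero_of_notMem_tsupport
    intro hmem
    have := hR hmem
    rw [Metric.mem_closedBall, Real.dist_eq, sub_zero] at this
    linarith
  set F : Finset ℤ := Finset.Icc (-(M:ℤ)) (M:ℤ) with hF
  -- step A : on [0,2π] the tsum is the finite sum over F
  have hA : ∀ l x : ℝ, x ∈ Set.uIcc (0:ℝ) (2 * Real.pi) →
      (∑' n : ℤ, u (x + 2 * Real.pi * (n : ℝ)) *
        Complex.exp (-Complex.I * (l : ℂ) * ((x + 2 * Real.pi * (n : ℝ) : ℝ) : ℂ)))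
      = ∑ n ∈ F, u (x + 2 * Real.pi * (n : ℝ)) *
        Complex.exp (-Complex.I * (l : ℂ) * ((x + 2 * Real.pi * (n : ℝ) : ℝ) : ℂ)) := by
    intro l x hx
    rw [Set.uIcc_of_le (by positivity)] at hx
    apply tsum_eq_sum
    intro n hn
    have hzero : u (x + 2 * Real.pi * (n : ℝ)) = 0 := by
      apply hvanish
      rw [hF, Finset.mem_Icc, not_and_or] at hn
      rcases hn with hn | hn
      · push_neg at hn
        have hn' : (n:ℝ) ≤ -(M:ℝ) - 1 := by exact_mod_cast Int.le_of_lt_add_one (by linarith [hn] : n < -(M:ℤ) - 1 + 1)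
        have h3 : x + 2 * Real.pi * n ≤ -(2 * Real.pi * M) := by nlinarith [hx.2, hpi]
        have := neg_le_abs (x + 2 * Real.pi * (n:ℝ))
        linarith
      · push_neg at hn
        have hn' : (M:ℝ) + 1 ≤ (n:ℝ) := by exact_mod_cast hn
        have h3 : 2 * Real.pi * M ≤ x + 2 * Real.pi * n := by nlinarith [hx.1, hpi]
        have := le_abs_self (x + 2 * Real.pi * (n:ℝ))
        linarith
    simp [hzero]
  have hpi2 : (0:ℝ) ≤ 2 * Real.pi := by positivity
  -- finite-sum Bloch transform
  set S : ℝ → ℝ → ℂ := fun l x => ∑ n ∈ F, u (x + 2 * Real.pi * (n : ℝ)) *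
        Complex.exp (-Complex.I * (l : ℂ) * ((x + 2 * Real.pi * (n : ℝ) : ℝ) : ℂ)) with hS
  have hScont : ∀ (l : ℝ) (n : ℤ), Continuous (fun x : ℝ => u (x + 2 * Real.pi * (n:ℝ)) *
      Complex.exp (-Complex.I * (l : ℂ) * ((x + 2 * Real.pi * (n : ℝ) : ℝ) : ℂ))) := by
    intro l n; fun_prop
  have hcontC : ∀ n m : ℤ, Continuous fun x : ℝ =>
      u (x + 2*Real.pi*(n:ℝ)) * (starRingEnd ℂ) (u (x + 2*Real.pi*(m:ℝ))) := by
    intro n m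
    exact (hu.comp (continuous_id.add continuous_const)).mul
      (continuous_star.comp (hu.comp (continuous_id.add continuous_const)))
  have hstep1 : (∫ l in (-(1 / 2) : ℝ)..(1 / 2), ∫ x in (0 : ℝ)..(2 * Real.pi),
        ‖∑' n : ℤ, u (x + 2 * Real.pi * (n : ℝ)) *
            Complex.exp (-Complex.I * (l : ℂ) * ((x + 2 * Real.pi * (n : ℝ) : ℝ) : ℂ))‖ ^ 2)
      = ∫ l in (-(1 / 2) : ℝ)..(1 / 2), ∫ x in (0 : ℝ)..(2 * Real.pi), ‖S l x‖ ^ 2 := by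
    apply intervalIntegral.integral_congr
    intro l _
    apply intervalIntegral.integral_congr
    intro x hx
    simp only [hS]
    rw [hA l x hx]
  rw [hstep1]
  -- the coefficient integrals
  set C : ℤ → ℤ → ℂ := fun n m => ∫ x in (0:ℝ)..(2*Real.pi),
      u (x + 2*Real.pi*(n:ℝ)) * (starRingEnd ℂ) (u (x + 2*Real.pi*(m:ℝ))) with hCdef
  have hB : ∀ l : ℝ, ((∫ x in (0:ℝ)..(2 * Real.pi), ‖S l x‖ ^ 2 : ℝ) : ℂ)
      = ∑ n ∈ F, ∑ m ∈ F, C n m *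
          Complex.exp ((-Complex.I * (2 * Real.pi * (((n - m : ℤ)) : ℂ))) * (l:ℂ)) := by
    intro l
    rw [← intervalIntegral.integral_ofReal]
    have e1 : (∫ x in (0:ℝ)..(2 * Real.pi), ((‖S l x‖ ^ 2 : ℝ) : ℂ))
        = ∫ x in (0:ℝ)..(2 * Real.pi), ∑ n ∈ F, ∑ m ∈ F,
            (u (x + 2*Real.pi*(n:ℝ)) * (starRingEnd ℂ) (u (x + 2*Real.pi*(m:ℝ)))) *
              Complex.exp ((-Complex.I * (2 * Real.pi * (((n - m : ℤ)) : ℂ))) * (l:ℂ)) := by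
      apply intervalIntegral.integral_congr
      intro x _
      show ((‖S l x‖ ^ 2 : ℝ) : ℂ) = _
      rw [normsq_cast]
      simp only [hS]
      rw [map_sum, Finset.sum_mul_sum]
      exact Finset.sum_congr rfl fun n _ => Finset.sum_congr rfl fun m _ => term_mul _ _ _ _ _ _
    rw [e1, intervalIntegral.integral_finset_sum]
    · refine Finset.sum_congr rfl fun n _ => ?_
      rw [intervalIntegral.integral_finset_sum]
      · refine Finset.sum_congr rfl fun m _ => ?_
        rw [intervalIntegral.integral_mul_const]
      · intro m _
        exact (hcontC n m).mul continuous_const |>.intervalIntegrable _ _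
    · intro n _
      apply Continuous.intervalIntegrable
      apply continuous_finset_sum
      intro m _
      exact (hcontC n m).mul continuous_const
  have hC : ((∫ l in (-(1 / 2) : ℝ)..(1 / 2), ∫ x in (0 : ℝ)..(2 * Real.pi), ‖S l x‖ ^ 2 : ℝ) : ℂ)
      = ∑ n ∈ F, C n n := by
    rw [← intervalIntegral.integral_ofReal]
    rw [intervalIntegral.integral_congr (fun l _ => hB l)]
    rw [intervalIntegral.integral_finset_sum]
    · have : ∀ n ∈ F, (∫ l in (-(1 / 2) : ℝ)..(1 / 2), ∑ m ∈ F, C n m *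
          Complex.exp ((-Complex.I * (2 * Real.pi * (((n - m : ℤ)) : ℂ))) * (l:ℂ)))
          = C n n := by
        intro n hn
        rw [intervalIntegral.integral_finset_sum]
        · have : ∀ m ∈ F, (∫ l in (-(1 / 2) : ℝ)..(1 / 2), C n m *
              Complex.exp ((-Complex.I * (2 * Real.pi * (((n - m : ℤ)) : ℂ))) * (l:ℂ)))
              = if n = m then C n m else 0 := by
            intro m _
            rw [intervalIntegral.integral_const_mul, exp_orth (n - m)]
            simp [sub_eq_zero]
          rw [Finset.sum_congr rfl this, Finset.sum_ite_eq, if_pos hn]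
        · intro m _
          exact (continuous_const.mul (by fun_prop : Continuous fun l : ℝ => Complex.exp ((-Complex.I * (2 * Real.pi * (((n - m : ℤ)) : ℂ))) * (l:ℂ)))).intervalIntegrable _ _
      rw [Finset.sum_congr rfl this]
    · intro n _
      apply Continuous.intervalIntegrable
      apply continuous_finset_sum
      intro m _
      exact continuous_const.mul (by fun_prop)
  have hD : ∀ n : ℤ, C n n = ((∫ x in (0:ℝ)..(2*Real.pi), ‖u (x + 2*Real.pi*(n:ℝ))‖^2 : ℝ) : ℂ) := by
    intro n
    rw [← intervalIntegral.integral_ofReal, hCdef]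
    apply intervalIntegral.integral_congr
    intro x _
    exact (normsq_cast _).symm
  -- conclude the double integral equals a real sum
  have hreal : (∫ l in (-(1 / 2) : ℝ)..(1 / 2), ∫ x in (0 : ℝ)..(2 * Real.pi), ‖S l x‖ ^ 2 : ℝ)
      = ∑ n ∈ F, ∫ x in (0:ℝ)..(2*Real.pi), ‖u (x + 2*Real.pi*(n:ℝ))‖^2 := by
    have := hC
    rw [Finset.sum_congr rfl (fun n _ => hD n), ← Complex.ofReal_sum] at this
    exact_mod_cast this
  rw [hreal]
  have hshift : ∀ n : ℤ, (∫ x in (0:ℝ)..(2*Real.pi), ‖u (x + 2*Real.pi*(n:ℝ))‖^2)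
      = ∫ x in (0 + 2*Real.pi*(n:ℝ))..(2*Real.pi + 2*Real.pi*(n:ℝ)), ‖u x‖^2 := by
    intro n
    exact intervalIntegral.integral_comp_add_right (f := fun y => ‖u y‖^2) (2*Real.pi*(n:ℝ))
  rw [Finset.sum_congr rfl fun n _ => hshift n]
  set a : ℕ → ℝ := fun k => 2*Real.pi*(k:ℝ) - 2*Real.pi*(M:ℝ) with ha
  have hreindex : (∑ n ∈ F, ∫ x in (0 + 2*Real.pi*(n:ℝ))..(2*Real.pi + 2*Real.pi*(n:ℝ)), ‖u x‖^2)
      = ∑ k ∈ Finset.range (2*M+1), ∫ x in a k..a (k+1), ‖u x‖^2 := by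
    apply Finset.sum_nbij' (i := fun n : ℤ => (n + M).toNat) (j := fun k : ℕ => (k:ℤ) - M)
    · intro n hn
      rw [hF, Finset.mem_Icc] at hn
      rw [Finset.mem_range]
      omega
    · intro k hk
      rw [Finset.mem_range] at hk
      rw [hF, Finset.mem_Icc]
      omega
    · intro n hn
      rw [hF, Finset.mem_Icc] at hn
      omega
    · intro k hk
      rw [Finset.mem_range] at hk
      omega
    · intro n hn
      rw [hF, Finset.mem_Icc] at hn
      have hcastR : (((n + (M:ℤ)).toNat : ℕ) : ℝ) = (n:ℝ) + (M:ℝ) := by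
        have h0 := Int.toNat_of_nonneg (show (0:ℤ) ≤ n + M by omega)
        exact_mod_cast congrArg (Int.cast : ℤ → ℝ) h0
      have e1 : a ((n + M).toNat) = 0 + 2*Real.pi*(n:ℝ) := by
        show 2*Real.pi*(((n + (M:ℤ)).toNat : ℕ) : ℝ) - 2*Real.pi*(M:ℝ) = _
        rw [hcastR]; ring
      have e2 : a ((n + M).toNat + 1) = 2*Real.pi + 2*Real.pi*(n:ℝ) := by
        show 2*Real.pi*((((n + (M:ℤ)).toNat + 1 : ℕ)) : ℝ) - 2*Real.pi*(M:ℝ) = _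
        rw [Nat.cast_add, Nat.cast_one, hcastR]; ring
      rw [e1, e2]
  rw [hreindex]
  have hint : ∀ (c d : ℝ), IntervalIntegrable (fun x => ‖u x‖^2) volume c d :=
    fun c d => ((hu.norm.pow 2).intervalIntegrable c d)
  rw [intervalIntegral.sum_integral_adjacent_intervals (fun k _ => hint _ _)]
  have ha0 : a 0 = -(2*Real.pi*(M:ℝ)) := by rw [ha]; push_cast; ring
  have haN : a (2*M+1) = 2*Real.pi*(M:ℝ) + 2*Real.pi := by rw [ha]; push_cast; ring
  have hle : a 0 ≤ a (2*M+1) := by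
    rw [ha0, haN]
    nlinarith [hpi, (Nat.cast_nonneg M : (0:ℝ) ≤ (M:ℝ))]
  rw [intervalIntegral.integral_of_le hle]
  rw [setIntegral_eq_integral_of_forall_compl_eq_zero]
  intro x hx
  rw [Set.mem_Ioc, ha0, haN] at hx
  push_neg at hx
  have hMnn : (0:ℝ) ≤ 2*Real.pi*(M:ℝ) := by positivity
  have : u x = 0 := by
    rcases le_or_gt x (-(2*Real.pi*(M:ℝ))) with h | h
    · exact hvanish x (by have := neg_le_abs x; linarith)
    · have h2 := hx h
      exact hvanish x (by have := le_abs_self x; linarith)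
  simp [this]
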